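/- Energy dissipation: let φ : ℝ → ℝ be continuous, V(s) = ∫₀^s φ(τ) dτ, L(w) = Σ_{i=0}^{N} V(w_i), and let u : [0,∞) → ℝ^{N+1} be a global solution of the grid system u'(t) = Δ_N(φ∘u(t)). Then for all 0 ≤ t₁ ≤ t₂, ∫_{t₁}^{t₂} Σ_{i=0}^{N−1} ( φ(u_{i+1}(t)) − φ(u_i(t)) )² dt = ε² ( L(u(t₁)) − L(u(t₂)) ); in particular this integral is bounded by ε²(L(u(0)) − inf_{t≥0} L(u(t))) uniformly in t₂. -/

import Mathlib

/-- The discrete Neumann Laplacian on `{0,…,N}` with mesh `ε = 1/N`: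
`(Δ_N w)_i = (w_{i+1} − 2w_i + w_{i−1})/ε²` for `0 < i < N`,
`(Δ_N w)_0 = (w_1 − w_0)/ε²`, `(Δ_N w)_N = (w_{N−1} − w_N)/ε²`. -/
noncomputable def lapN (N : ℕ) (w : Fin (N + 1) → ℝ) (i : Fin (N + 1)) : ℝ :=
  if i.val = 0 then
    (N : ℝ) ^ 2 * (w ⟨min 1 N, by omega⟩ - w ⟨0, by omega⟩)
  else if h : i.val = N then
    (N : ℝ) ^ 2 * (w ⟨N - 1, by omega⟩ - w ⟨N, by omega⟩)
  else
    (N : ℝ) ^ 2 *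
      (w ⟨i.val + 1, by have := i.isLt; omega⟩ - 2 * w i + w ⟨i.val - 1, by omega⟩)

private lemma abel_key (C : ℝ) (M : ℕ) (B : ℕ → ℝ) :
    (∑ i ∈ Finset.range M, B (i+1) * (C * (B (i+2) - 2 * B (i+1) + B i)))
      + B (M+1) * (C * (B M - B (M+1))) + B 0 * (C * (B 1 - B 0))
    = -C * ∑ i ∈ Finset.range (M+1), (B (i+1) - B i) ^ 2 := by
  induction M with
  | zero => simp; ring
  | succ M ih =>
    rw [Finset.sum_range_succ, Finset.sum_range_succ (f := fun i => (B (i+1) - B i) ^ 2)]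
    linear_combination ih

private lemma lap_pairing (N : ℕ) (hN : 1 ≤ N) (b : Fin (N + 1) → ℝ) :
    ∑ i, b i * lapN N b i
      = -((N : ℝ) ^ 2) * ∑ i : Fin N, (b i.succ - b i.castSucc) ^ 2 := by
  obtain ⟨M, rfl⟩ : ∃ M, N = M + 1 := ⟨N - 1, by omega⟩
  set C : ℝ := ((M + 1 : ℕ) : ℝ) ^ 2 with hC
  set B : ℕ → ℝ := fun n => b ⟨min n (M + 1), by omega⟩ with hB
  have key : ∀ n (hn : n ≤ M + 1), B n = b ⟨n, by omega⟩ := by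
    intro n hn
    simp only [hB]
    congr 1
    ext
    simp [Nat.min_eq_left hn]
  have hbi : ∀ i : Fin (M + 2), b i = B i.val := by
    intro i
    rw [key i.val (by omega)]
  have hlap : ∀ i : Fin (M + 2), lapN (M + 1) b i =
      (if i.val = 0 then C * (B 1 - B 0)
        else if i.val = M + 1 then C * (B M - B (M + 1))
        else C * (B (i.val + 1) - 2 * B i.val + B (i.val - 1))) := by
    intro i
    unfold lapN
    split_ifs with h1 h2
    · simp [hB, hC]
    · simp [hB, hC, Nat.min_eq_left (Nat.le_succ M)]
    · have e1 : (i.val + 1) ⊓ (M + 1) = i.val + 1 := by omega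
      have e2 : i.val ⊓ (M + 1) = i.val := by omega
      have e3 : (i.val - 1) ⊓ (M + 1) = i.val - 1 := by omega
      simp [hB, hC, e1, e2, e3]
  have hL : (∑ i : Fin (M + 2), b i * lapN (M + 1) b i)
      = ∑ i ∈ Finset.range (M + 2), B i *
        (if i = 0 then C * (B 1 - B 0)
          else if i = M + 1 then C * (B M - B (M + 1))
          else C * (B (i + 1) - 2 * B i + B (i - 1))) := by
    rw [← Fin.sum_univ_eq_sum_range (fun n => B n *
        (if n = 0 then C * (B 1 - B 0)
          else if n = M + 1 then C * (B M - B (M + 1))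
          else C * (B (n + 1) - 2 * B n + B (n - 1)))) (M + 2)]
    exact Finset.sum_congr rfl fun i _ => by rw [hbi i, hlap i]
  have hR : (∑ i : Fin (M + 1), (b i.succ - b i.castSucc) ^ 2)
      = ∑ i ∈ Finset.range (M + 1), (B (i + 1) - B i) ^ 2 := by
    rw [← Fin.sum_univ_eq_sum_range (fun n => (B (n + 1) - B n) ^ 2) (M + 1)]
    refine Finset.sum_congr rfl fun i _ => ?_
    rw [key (i.val + 1) (by omega), key i.val (by omega)]
    rfl
  rw [hL, hR]
  rw [Finset.sum_range_succ', Finset.sum_range_succ]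
  have hmid : ∀ i ∈ Finset.range M,
      B (i + 1) * (if i + 1 = 0 then C * (B 1 - B 0)
        else if i + 1 = M + 1 then C * (B M - B (M + 1))
        else C * (B (i + 1 + 1) - 2 * B (i + 1) + B (i + 1 - 1)))
      = B (i + 1) * (C * (B (i + 2) - 2 * B (i + 1) + B i)) := by
    intro i hi
    rw [Finset.mem_range] at hi
    rw [if_neg (by omega), if_neg (by omega)]
    norm_num
  rw [Finset.sum_congr rfl hmid]
  simp only [if_pos rfl, if_neg (by omega : M + 1 ≠ 0), if_pos rfl]
  have := abel_key C M B
  push_cast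
  linarith [abel_key C M B]

/-- energy dissipation. With `V(s) = ∫₀^s φ(τ) dτ`,
`L(w) = Σᵢ V(wᵢ)` and a global solution `u` of the grid system, for all
`0 ≤ t₁ ≤ t₂`,
`∫_{t₁}^{t₂} Σ_{i=0}^{N−1} (φ(u_{i+1}(t)) − φ(uᵢ(t)))² dt = ε²(L(u(t₁)) − L(u(t₂)))`
(`ε² = 1/N²`); in particular the integral is bounded by
`ε²(L(u(0)) − inf_{t ≥ 0} L(u(t)))`, uniformly in `t₂` (the infimum being
expressed through an arbitrary lower bound `m` of `{L(u(t)) : t ≥ 0}`). -/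
theorem stmt11 (φ : ℝ → ℝ) (hφ : Continuous φ) (N : ℕ) (hN : 1 ≤ N)
    (u : ℝ → Fin (N + 1) → ℝ)
    (hu : ∀ t ∈ Set.Ici (0 : ℝ),
      HasDerivWithinAt u (lapN N fun j => φ (u t j)) (Set.Ici 0) t) :
    (∀ t₁ t₂ : ℝ, 0 ≤ t₁ → t₁ ≤ t₂ →
      (∫ t in t₁..t₂, ∑ i : Fin N, (φ (u t i.succ) - φ (u t i.castSucc)) ^ 2) =
        (1 / (N : ℝ) ^ 2) *
          ((∑ i, ∫ τ in (0 : ℝ)..(u t₁ i), φ τ) -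
            ∑ i, ∫ τ in (0 : ℝ)..(u t₂ i), φ τ)) ∧
    ∀ m : ℝ, (∀ t : ℝ, 0 ≤ t → m ≤ ∑ i, ∫ τ in (0 : ℝ)..(u t i), φ τ) →
      ∀ t₂ : ℝ, 0 ≤ t₂ →
        (∫ t in (0 : ℝ)..t₂,
            ∑ i : Fin N, (φ (u t i.succ) - φ (u t i.castSucc)) ^ 2) ≤
          (1 / (N : ℝ) ^ 2) * ((∑ i, ∫ τ in (0 : ℝ)..(u 0 i), φ τ) - m) := by
  have hN2 : ((N : ℝ) ^ 2) ≠ 0 := by positivity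
  have hVderiv : ∀ s : ℝ, HasDerivAt (fun s => ∫ τ in (0 : ℝ)..s, φ τ) (φ s) s := fun s =>
    intervalIntegral.integral_hasDerivAt_right (hφ.intervalIntegrable 0 s)
      (hφ.stronglyMeasurableAtFilter _ _) hφ.continuousAt
  have hucont : ContinuousOn u (Set.Ici 0) := fun t ht => (hu t ht).continuousWithinAt
  have hGcont : ContinuousOn
      (fun t => ∑ i : Fin N, (φ (u t i.succ) - φ (u t i.castSucc)) ^ 2) (Set.Ici 0) := by
    apply continuousOn_finset_sum
    intro i _
    exact (((hφ.comp_continuousOn ((continuous_apply i.succ).comp_continuousOn hucont)).sub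
      (hφ.comp_continuousOn ((continuous_apply i.castSucc).comp_continuousOn hucont))).pow 2)
  have hLderiv : ∀ t ∈ Set.Ici (0 : ℝ),
      HasDerivWithinAt (fun s => ∑ i, ∫ τ in (0 : ℝ)..(u s i), φ τ)
        (-((N : ℝ) ^ 2) * ∑ i : Fin N, (φ (u t i.succ) - φ (u t i.castSucc)) ^ 2)
        (Set.Ici 0) t := by
    intro t ht
    have hcomp : ∀ i : Fin (N + 1),
        HasDerivWithinAt (fun s => u s i) (lapN N (fun j => φ (u t j)) i) (Set.Ici 0) t :=
      fun i => hasDerivWithinAt_pi.mp (hu t ht) i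
    have hsum : HasDerivWithinAt (fun s => ∑ i, ∫ τ in (0 : ℝ)..(u s i), φ τ)
        (∑ i, φ (u t i) * lapN N (fun j => φ (u t j)) i) (Set.Ici 0) t :=
      HasDerivWithinAt.fun_sum fun i _ =>
        by have := (hVderiv (u t i)).comp_hasDerivWithinAt t (hcomp i); exact this
    have := lap_pairing N hN (fun j => φ (u t j))
    rw [this] at hsum
    exact hsum
  have main : ∀ t₁ t₂ : ℝ, 0 ≤ t₁ → t₁ ≤ t₂ →
      (∫ t in t₁..t₂, ∑ i : Fin N, (φ (u t i.succ) - φ (u t i.castSucc)) ^ 2) =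
        (1 / (N : ℝ) ^ 2) *
          ((∑ i, ∫ τ in (0 : ℝ)..(u t₁ i), φ τ) -
            ∑ i, ∫ τ in (0 : ℝ)..(u t₂ i), φ τ) := by
    intro t₁ t₂ h0 h12
    have hsub : Set.Icc t₁ t₂ ⊆ Set.Ici 0 := fun x hx => le_trans h0 hx.1
    have hLc : ContinuousOn (fun s => ∑ i, ∫ τ in (0 : ℝ)..(u s i), φ τ) (Set.Icc t₁ t₂) :=
      fun x hx => ((hLderiv x (hsub hx)).continuousWithinAt).mono hsub
    have hGint : IntervalIntegrable
        (fun t => -((N : ℝ) ^ 2) * ∑ i : Fin N, (φ (u t i.succ) - φ (u t i.castSucc)) ^ 2)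
        MeasureTheory.volume t₁ t₂ := by
      apply ContinuousOn.intervalIntegrable
      rw [Set.uIcc_of_le h12]
      exact (continuousOn_const.mul (hGcont.mono hsub))
    have hftc := intervalIntegral.integral_eq_sub_of_hasDeriv_right_of_le h12 hLc
      (fun x hx => (hLderiv x (hsub ⟨le_of_lt hx.1, le_of_lt hx.2⟩)).mono
        (fun y hy => le_trans (le_trans h0 (le_of_lt hx.1)) (le_of_lt hy)))
      hGint
    rw [intervalIntegral.integral_const_mul] at hftc
    field_simp
    linarith
  refine ⟨main, ?_⟩
  intro m hm t₂ ht₂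
  rw [main 0 t₂ le_rfl ht₂]
  have hmle := hm t₂ ht₂
  have : (0 : ℝ) ≤ 1 / (N : ℝ) ^ 2 := by positivity
  apply mul_le_mul_of_nonneg_left _ this
  linarith
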